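/- Define G_2 : ℚ × ℚ → ℚ by G_2(X,Y) = (9·Y·(X+2)^2 + 8·(X+8)^2)/(X+26)^2. Let c : ℕ → ℚ satisfy c(2) = 1/2 and c(s+1) = G_2(1 − 3/9^{s−1}, c(s)) for every s ≥ 2. Then for every s ≥ 2, c(s) = 1 − N/D, where n = 2(s−2), d = (3^{s−1} − 1)/2, N = (n·3^{n+1})/4 + (5·3^{n+1} + (−1)^n)/16, and D = d^2·(d+1)^2/2, all computed in ℚ. -/

import Mathlib

/-- The row-2 recursion function of the Circuit Array. -/
def G₂ (X Y : ℚ) : ℚ := (9 * Y * (X + 2) ^ 2 + 8 * (X + 8) ^ 2) / (X + 26) ^ 2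

set_option maxHeartbeats 2000000 in
private lemma key (a K : ℚ) (ha1 : 1 ≤ a) :
    1 - ((2 * (K + 1) * (27 * a ^ 2)) / 4 + (5 * (27 * a ^ 2) + 1) / 16) /
        (((9 * a - 1) / 2) ^ 2 * ((9 * a - 1) / 2 + 1) ^ 2 / 2)
      = G₂ (1 - 3 / (9 * a ^ 2))
          (1 - ((2 * K * (3 * a ^ 2)) / 4 + (5 * (3 * a ^ 2) + 1) / 16) /
            (((3 * a - 1) / 2) ^ 2 * ((3 * a - 1) / 2 + 1) ^ 2 / 2)) := by
  have ha : (0:ℚ) < a := by linarith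
  have hane : a ≠ 0 := ne_of_gt ha
  have hd1 : (3 * a - 1) ≠ 0 := by nlinarith
  have hd2 : (3 * a + 1) ≠ 0 := by nlinarith
  have hd3 : (9 * a - 1) ≠ 0 := by nlinarith
  have hd4 : (9 * a + 1) ≠ 0 := by nlinarith
  have hX : (1 - 3 / (9 * a ^ 2)) + 26 ≠ 0 := by
    have h9a : (0:ℚ) < 9 * a ^ 2 := by positivity
    have : 3 / (9 * a ^ 2) ≤ 3 := by rw [div_le_iff₀ h9a]; nlinarith
    nlinarith
  have h64a : (64 - a^2*10368 + a^4*419904) = (8*(9*a-1)*(9*a+1))^2 := by ring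
  have h64b : (64 - a^2*1152 + a^4*5184) = (8*(3*a-1)*(3*a+1))^2 := by ring
  have h9c : (9 - a^2*1458 + a^4*59049) = (3*(9*a-1)*(9*a+1))^2 := by ring
  have n1 : (64 - a^2*10368 + a^4*419904) ≠ 0 := by
    rw [h64a]; exact pow_ne_zero _ (by exact mul_ne_zero (mul_ne_zero (by norm_num) hd3) hd4)
  have n2 : (64 - a^2*1152 + a^4*5184) ≠ 0 := by
    rw [h64b]; exact pow_ne_zero _ (mul_ne_zero (mul_ne_zero (by norm_num) hd1) hd2)
  have n3 : (9 - a^2*1458 + a^4*59049) ≠ 0 := by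
    rw [h9c]; exact pow_ne_zero _ (mul_ne_zero (mul_ne_zero (by norm_num) hd3) hd4)
  have n4 : (1 - a^2*162 + a^4*6561) ≠ 0 := by
    rw [show (1 - a^2*162 + a^4*6561) = ((9*a-1)*(9*a+1))^2 by ring]
    exact pow_ne_zero _ (mul_ne_zero hd3 hd4)
  have n5 : (1 - a^2*18 + a^4*81) ≠ 0 := by
    rw [show (1 - a^2*18 + a^4*81) = ((3*a-1)*(3*a+1))^2 by ring]
    exact pow_ne_zero _ (mul_ne_zero hd1 hd2)
  rw [G₂]
  field_simp
  ring_nf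
  field_simp [n1, n2, n3, n4, n5]
  ring

private def Fm (k : ℕ) : ℚ :=
  1 - ((2 * (k : ℚ) * 3 ^ (2 * k + 1)) / 4 + (5 * 3 ^ (2 * k + 1) + 1) / 16) /
    ((((3 ^ (k + 1) - 1) / 2 : ℚ)) ^ 2 * (((3 ^ (k + 1) - 1) / 2 : ℚ) + 1) ^ 2 / 2)

private lemma Fm_step (k : ℕ) : Fm (k + 1) = G₂ (1 - 3 / 9 ^ (k + 1)) (Fm k) := by
  have e3 : (3:ℚ) = 3 ^ 1 := by norm_num
  have h9 : (9:ℚ) ^ (k + 1) = 9 * ((3:ℚ) ^ k) ^ 2 := by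
    rw [show (9:ℚ) = 3 ^ 2 by norm_num, ← pow_mul, ← pow_mul,
      show 2 * (k + 1) = k * 2 + 2 by ring, pow_add]; ring
  have h1 : (3:ℚ) ^ (k + 1) = 3 * (3:ℚ) ^ k := by rw [pow_succ]; ring
  have h2 : (3:ℚ) ^ (k + 1 + 1) = 9 * (3:ℚ) ^ k := by rw [pow_succ, pow_succ]; ring
  have h3 : (3:ℚ) ^ (2 * k + 1) = 3 * ((3:ℚ) ^ k) ^ 2 := by
    rw [show 2 * k + 1 = k * 2 + 1 by ring, pow_add, pow_mul]; ring
  have h4 : (3:ℚ) ^ (2 * (k + 1) + 1) = 27 * ((3:ℚ) ^ k) ^ 2 := by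
    rw [show 2 * (k + 1) + 1 = k * 2 + 3 by ring, pow_add, pow_mul]; ring
  have ha1 : (1:ℚ) ≤ 3 ^ k := one_le_pow₀ (by norm_num)
  simp only [Fm, h9, h1, h2, h3, h4, Nat.cast_add, Nat.cast_one]
  exact key (3 ^ k) k ha1

private lemma Fm_all (c : ℕ → ℚ) (hc2 : c 2 = 1 / 2)
    (hcrec : ∀ s ≥ 2, c (s + 1) = G₂ (1 - 3 / 9 ^ (s - 1)) (c s)) :
    ∀ k : ℕ, c (k + 2) = Fm k := by
  intro k
  induction k with
  | zero => rw [hc2]; norm_num [Fm]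
  | succ n ih =>
    have := hcrec (n + 2) (by omega)
    rw [show n + 2 - 1 = n + 1 by omega] at this
    rw [show n + 1 + 2 = n + 2 + 1 by omega, this, ih, Fm_step]

theorem row2_closed_form (c : ℕ → ℚ) (hc2 : c 2 = 1 / 2)
    (hcrec : ∀ s ≥ 2, c (s + 1) = G₂ (1 - 3 / 9 ^ (s - 1)) (c s)) :
    ∀ s ≥ 2,
      c s = 1 -
        ((2 * ((s : ℚ) - 2) * 3 ^ (2 * (s - 2) + 1)) / 4 +
            (5 * 3 ^ (2 * (s - 2) + 1) + (-1 : ℚ) ^ (2 * (s - 2))) / 16) /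
          ((((3 ^ (s - 1) - 1) / 2 : ℚ)) ^ 2 * (((3 ^ (s - 1) - 1) / 2 : ℚ) + 1) ^ 2 / 2) := by
  intro s hs
  obtain ⟨k, rfl⟩ : ∃ k, s = k + 2 := ⟨s - 2, by omega⟩
  have := Fm_all c hc2 hcrec k
  rw [this, Fm]
  rw [show k + 2 - 2 = k by omega, show k + 2 - 1 = k + 1 by omega]
  push_cast
  rw [show (-1:ℚ) ^ (2 * k) = 1 by rw [pow_mul]; norm_num]
  ring
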